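/- For every pair of integers 0 ≤ j, k ≤ n−1, the series ∑_{x∈ℤ} Φ_j(x) Ψ_k(x) converges absolutely, and ∑_{x∈ℤ} Φ_j(x) Ψ_k(x) = δ_{j,k} (equal to 1 if j = k and 0 otherwise). -/

import Mathlib

open Complex MeasureTheory
open scoped Real

/-- `Ψ_k(x) = (1/(2πi)) ∮_{|w|=ρ} (w−1)^k w^{−(x+n+1)} e^{aw + b/w} dw`. -/
noncomputable def Psi (n : ℕ) (a b ρ : ℝ) (k : ℕ) (x : ℤ) : ℂ :=
  (2 * (Real.pi : ℂ) * Complex.I)⁻¹ *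
    ∮ w in C(0, ρ), (w - 1) ^ k * w ^ (-(x + (n : ℤ) + 1)) *
      Complex.exp ((a : ℂ) * w + (b : ℂ) / w)

/-- `Φ_j(x) = (1/(2πi)) ∮_{|z−1|=r} z^{x+n} (z−1)^{−(j+1)} e^{−az − b/z} dz`. -/
noncomputable def Phi (n : ℕ) (a b r : ℝ) (j : ℕ) (x : ℤ) : ℂ :=
  (2 * (Real.pi : ℂ) * Complex.I)⁻¹ *
    ∮ z in C(1, r), z ^ (x + (n : ℤ)) * (z - 1) ^ (-((j : ℤ) + 1)) *
      Complex.exp (-((a : ℂ) * z) - (b : ℂ) / z)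

section helperdefs
open Metric
/-- Interchange of a countable sum with a circle integral, given a uniform summable bound. -/
lemma circle_hasSum {ι : Type*} [Countable ι] (c : ℂ) (ρ : ℝ) (hρ : 0 ≤ ρ)
    (G : ι → ℂ → ℂ) (hG : ∀ i, ContinuousOn (G i) (sphere c ρ))
    (B : ι → ℝ) (hB : Summable B)
    (hbd : ∀ i, ∀ w ∈ sphere c ρ, ‖G i w‖ ≤ B i) :
    HasSum (fun i => ∮ w in C(c, ρ), G i w) (∮ w in C(c, ρ), ∑' i, G i w) := by
  have hsum : ∀ w ∈ sphere c ρ, Summable fun i => G i w := fun w hw =>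
    Summable.of_norm_bounded hB (fun i => hbd i w hw)
  simp only [circleIntegral, deriv_circleMap, smul_eq_mul]
  apply intervalIntegral.hasSum_integral_of_dominated_convergence
    (bound := fun i _ => ρ * B i)
  · intro i
    exact (((continuous_circleMap 0 ρ).mul continuous_const).mul
      ((hG i).comp_continuous (continuous_circleMap c ρ)
        (fun θ => circleMap_mem_sphere c hρ θ))).aestronglyMeasurable
  · intro i
    filter_upwards with θ _
    rw [norm_mul, norm_mul]
    have h1 : ‖circleMap 0 ρ θ‖ = ρ := by
      rw [norm_circleMap_zero]; exact _root_.abs_of_nonneg hρ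
    rw [h1, Complex.norm_I, mul_one]
    exact mul_le_mul_of_nonneg_left (hbd i _ (circleMap_mem_sphere c hρ θ)) hρ
  · filter_upwards with θ _
    exact (hB.mul_left ρ)
  · exact intervalIntegrable_const
  · filter_upwards with θ _
    exact ((hsum _ (circleMap_mem_sphere c hρ θ)).hasSum).mul_left _
lemma diffAt_exp_ab (a b : ℝ) {w : ℂ} (hw : w ≠ 0) :
    DifferentiableAt ℂ (fun w : ℂ => Complex.exp ((a : ℂ) * w + (b : ℂ) / w)) w :=
  (((differentiableAt_const _).mul differentiableAt_id).add
    ((differentiableAt_const _).div differentiableAt_id hw)).cexp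

lemma diffAt_psi_integrand (a b : ℝ) (k : ℕ) (t : ℤ) {w : ℂ} (hw : w ≠ 0) :
    DifferentiableAt ℂ
      (fun w : ℂ => (w - 1) ^ k * w ^ t * Complex.exp ((a : ℂ) * w + (b : ℂ) / w)) w :=
  (((differentiableAt_id.sub_const 1).pow k).mul
    (differentiableAt_zpow.mpr (Or.inl hw))).mul (diffAt_exp_ab a b hw)

lemma psi_radius_indep (n : ℕ) (a b : ℝ) (k : ℕ) (x : ℤ) {ρ₁ ρ₂ : ℝ}
    (h₁ : 0 < ρ₁) (h₂ : 0 < ρ₂) :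
    Psi n a b ρ₁ k x = Psi n a b ρ₂ k x := by
  have key : ∀ {s t : ℝ}, 0 < s → s ≤ t → Psi n a b t k x = Psi n a b s k x := by
    intro s t hs hst
    unfold Psi
    congr 1
    apply circleIntegral_eq_of_differentiable_on_annulus_off_countable hs hst
      Set.countable_empty
    · intro w hw
      have hw0 : w ≠ 0 := by
        rintro rfl
        have := hw.2
        simp only [mem_ball, dist_self] at this
        exact this hs
      exact (diffAt_psi_integrand a b k _ hw0).continuousAt.continuousWithinAt
    · intro w hw
      have hw0 : w ≠ 0 := by
        rintro rfl
        have := hw.1.2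
        simp only [mem_closedBall, dist_self] at this
        exact this hs.le
      exact diffAt_psi_integrand a b k _ hw0
  rcases le_total ρ₁ ρ₂ with h | h
  · exact (key h₁ h).symm
  · exact key h₂ h

lemma norm_two_pi_I_inv : ‖((2 * (Real.pi : ℂ) * Complex.I)⁻¹ : ℂ)‖ = (2 * Real.pi)⁻¹ := by
  rw [norm_inv, norm_mul, norm_mul, Complex.norm_I, mul_one]
  norm_num [Complex.norm_real, Real.norm_eq_abs, _root_.abs_of_nonneg Real.pi_pos.le]

lemma two_pi_I_ne_zero' : (2 * (Real.pi : ℂ) * Complex.I) ≠ 0 := by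
  simp [Real.pi_ne_zero, Complex.I_ne_zero, Complex.ofReal_ne_zero]

lemma psi_integrand_bound (a b : ℝ) (k : ℕ) (t : ℤ) {s : ℝ} (hs : 0 < s)
    {w : ℂ} (hw : w ∈ sphere (0 : ℂ) s) :
    ‖(w - 1) ^ k * w ^ t * Complex.exp ((a : ℂ) * w + (b : ℂ) / w)‖
      ≤ (s + 1) ^ k * s ^ t * Real.exp (|a| * s + |b| / s) := by
  have hw' : ‖w‖ = s := by simpa using hw
  rw [norm_mul, norm_mul, norm_pow, norm_zpow, hw']
  have h1 : ‖w - 1‖ ≤ s + 1 := by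
    calc ‖w - 1‖ ≤ ‖w‖ + ‖(1 : ℂ)‖ := norm_sub_le _ _
    _ = s + 1 := by rw [hw', norm_one]
  have h2 : ‖Complex.exp ((a : ℂ) * w + (b : ℂ) / w)‖ ≤ Real.exp (|a| * s + |b| / s) := by
    rw [Complex.norm_exp]
    apply Real.exp_le_exp.mpr
    have h3 : ((a : ℂ) * w + (b : ℂ) / w).re ≤ ‖(a : ℂ) * w + (b : ℂ) / w‖ :=
      Complex.re_le_norm _
    have h4 : ‖(a : ℂ) * w + (b : ℂ) / w‖ ≤ |a| * s + |b| / s := by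
      refine le_trans (norm_add_le _ _) ?_
      rw [norm_mul, norm_div, Complex.norm_real, Complex.norm_real, Real.norm_eq_abs,
        Real.norm_eq_abs, hw']
    exact h3.trans h4
  exact mul_le_mul (mul_le_mul_of_nonneg_right (pow_le_pow_left₀ (norm_nonneg _) h1 k)
    (zpow_nonneg hs.le _)) h2 (norm_nonneg _) (by positivity)

lemma psi_bound (n : ℕ) (a b : ℝ) (k : ℕ) (x : ℤ) {s : ℝ} (hs : 0 < s) :
    ‖Psi n a b s k x‖ ≤
      (s + 1) ^ k * Real.exp (|a| * s + |b| / s) * s ^ (-(x + (n : ℤ))) := by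
  have hint := circleIntegral.norm_integral_le_of_norm_le_const (c := (0:ℂ)) hs.le
    (fun w hw => psi_integrand_bound a b k (-(x + (n : ℤ) + 1)) hs hw)
  unfold Psi
  rw [norm_mul, norm_two_pi_I_inv]
  refine le_trans (mul_le_mul_of_nonneg_left hint (by positivity)) (le_of_eq ?_)
  have h2π : (2 * Real.pi) ≠ 0 := by positivity
  have hzp : s * s ^ (-(x + (n : ℤ) + 1)) = s ^ (-(x + (n : ℤ))) := by
    rw [show -(x + (n : ℤ)) = 1 + (-(x + (n : ℤ) + 1)) by ring, zpow_add₀ hs.ne', zpow_one]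
  rw [← hzp]
  field_simp
section bounds
variable {r : ℝ} (hr0 : 0 < r) (hr1 : r < 1)

lemma sphere_norm_bounds {z : ℂ} (hz : z ∈ sphere (1 : ℂ) r) :
    1 - r ≤ ‖z‖ ∧ ‖z‖ ≤ 1 + r := by
  have h : ‖z - 1‖ = r := mem_sphere_iff_norm.mp hz
  have h2 : |‖z‖ - ‖(1:ℂ)‖| ≤ ‖z - 1‖ := abs_norm_sub_norm_le _ _
  rw [norm_one, h] at h2
  rw [abs_le] at h2
  constructor <;> linarith [h2.1, h2.2]

lemma zpow_norm_bound (hr1 : r < 1) {z : ℂ} (hz : z ∈ sphere (1 : ℂ) r) (t : ℤ) :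
    ‖z ^ t‖ ≤ (if 0 ≤ t then (1 + r) else (1 - r)) ^ t := by
  obtain ⟨hlo, hhi⟩ := sphere_norm_bounds hz
  have hz0 : (0:ℝ) < ‖z‖ := by linarith
  rw [norm_zpow]
  by_cases ht : 0 ≤ t
  · simp only [ht, if_true]
    lift t to ℕ using ht
    rw [zpow_natCast, zpow_natCast]
    exact pow_le_pow_left₀ (norm_nonneg _) hhi t
  · simp only [ht, if_false]
    push_neg at ht
    obtain ⟨m, rfl⟩ : ∃ m : ℕ, t = -(m : ℤ) := ⟨t.natAbs, by omega⟩
    rw [zpow_neg, zpow_neg, zpow_natCast, zpow_natCast]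
    exact inv_anti₀ (pow_pos (by linarith) m) (pow_le_pow_left₀ (by linarith) hlo m)

lemma phi_integrand_bound (a b : ℝ) (j : ℕ) (t : ℤ) (hr0 : 0 < r) (hr1 : r < 1)
    {z : ℂ} (hz : z ∈ sphere (1 : ℂ) r) :
    ‖z ^ t * (z - 1) ^ (-((j : ℤ) + 1)) * Complex.exp (-((a : ℂ) * z) - (b : ℂ) / z)‖
      ≤ (if 0 ≤ t then (1 + r) else (1 - r)) ^ t * r ^ (-((j : ℤ) + 1)) *
          Real.exp (|a| * (1 + r) + |b| / (1 - r)) := by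
  obtain ⟨hlo, hhi⟩ := sphere_norm_bounds hz
  have hz0 : (0:ℝ) < ‖z‖ := by linarith
  have h1 : ‖(z - 1) ^ (-((j : ℤ) + 1))‖ = r ^ (-((j : ℤ) + 1)) := by
    rw [norm_zpow, mem_sphere_iff_norm.mp hz]
  have h2 : ‖Complex.exp (-((a : ℂ) * z) - (b : ℂ) / z)‖
      ≤ Real.exp (|a| * (1 + r) + |b| / (1 - r)) := by
    rw [Complex.norm_exp]
    apply Real.exp_le_exp.mpr
    have h3 := Complex.re_le_norm (-((a : ℂ) * z) - (b : ℂ) / z)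
    have h4 : ‖-((a : ℂ) * z) - (b : ℂ) / z‖
        ≤ ‖(a:ℂ) * z‖ + ‖(b:ℂ) / z‖ := by
      rw [show -((a : ℂ) * z) - (b : ℂ) / z = -((a:ℂ) * z + (b:ℂ)/z) by ring,
        norm_neg]
      exact norm_add_le _ _
    have h5 : ‖(a:ℂ)*z‖ + ‖(b:ℂ)/z‖
        ≤ |a| * (1 + r) + |b| / (1 - r) := by
      rw [norm_mul, norm_div, Complex.norm_real, Complex.norm_real, Real.norm_eq_abs,
        Real.norm_eq_abs]
      have hb1 : |b| / ‖z‖ ≤ |b| / (1 - r) :=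
        div_le_div_of_nonneg_left (abs_nonneg b) (by linarith) hlo
      have ha1 : |a| * ‖z‖ ≤ |a| * (1 + r) :=
        mul_le_mul_of_nonneg_left hhi (abs_nonneg a)
      exact add_le_add ha1 hb1
    linarith
  rw [norm_mul, norm_mul, h1]
  have hzt := zpow_norm_bound hr1 hz t
  have hnn : (0:ℝ) ≤ (if 0 ≤ t then (1 + r) else (1 - r)) ^ t := by
    apply zpow_nonneg; split <;> linarith
  exact mul_le_mul (mul_le_mul_of_nonneg_right hzt (zpow_nonneg hr0.le _)) h2
    (norm_nonneg _) (by positivity)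

end bounds

/-- geometric sum: for `‖z‖ < ‖w‖`, `∑ z^m w^(-m-1) = (w - z)⁻¹`. -/
lemma hasSum_geom_pair {z w : ℂ} (h : ‖z‖ < ‖w‖) :
    HasSum (fun m : ℕ => z ^ m * w ^ (-(m : ℤ) - 1)) (w - z)⁻¹ := by
  have hw0 : w ≠ 0 := by
    intro hw; rw [hw, norm_zero] at h; exact absurd h (not_lt.mpr (norm_nonneg z))
  have hq : ‖z / w‖ < 1 := by
    rw [norm_div]
    rw [div_lt_one (lt_of_le_of_lt (norm_nonneg z) h)]
    exact h
  have hgeo := (hasSum_geometric_of_norm_lt_one hq).mul_right w⁻¹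
  have heq : ∀ m : ℕ, z ^ m * w ^ (-(m : ℤ) - 1) = (z / w) ^ m * w⁻¹ := by
    intro m
    have hww : w ^ (-(m:ℤ) - 1) = (w ^ m * w)⁻¹ := by
      rw [show (-(m:ℤ) - 1) = -((m:ℤ) + 1) by ring, zpow_neg, zpow_add₀ hw0,
        zpow_natCast, zpow_one]
    rw [hww, div_pow, mul_inv]
    ring
  have hval : (1 - z / w)⁻¹ * w⁻¹ = (w - z)⁻¹ := by
    rw [← mul_inv]
    congr 1
    field_simp
  rw [← hval]
  exact hgeo.congr_fun heq
lemma dslope_cont_sphere {f : ℂ → ℂ} (hf : ∀ w : ℂ, w ≠ 0 → DifferentiableAt ℂ f w)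
    {z : ℂ} (hz0 : z ≠ 0) {s : ℝ} (hs : 0 < s) (hzs : ‖z‖ ≠ s) :
    ContinuousOn (dslope f z) (sphere (0:ℂ) s) := by
  intro w hw
  have hw' : ‖w‖ = s := by simpa using hw
  have hw0 : w ≠ 0 := by intro h; rw [h, norm_zero] at hw'; exact hs.ne hw'
  have hwz : w ≠ z := by intro h; rw [h] at hw'; exact hzs hw'
  exact ((continuousAt_dslope_of_ne hwz).mpr (hf w hw0).continuousAt).continuousWithinAt

/-- Cauchy formula for an annulus: the difference of the two circle integrals of
`f w / (w - z)` picks up the residue `2πi f z`. -/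
lemma two_circle_formula {f : ℂ → ℂ} (hf : ∀ w : ℂ, w ≠ 0 → DifferentiableAt ℂ f w)
    {z : ℂ} {ρ₁ R : ℝ} (h₁ : 0 < ρ₁) (hz₁ : ρ₁ < ‖z‖) (hzR : ‖z‖ < R) :
    (∮ w in C(0, R), (w - z)⁻¹ * f w) - (∮ w in C(0, ρ₁), (w - z)⁻¹ * f w)
      = 2 * (Real.pi : ℂ) * Complex.I * f z := by
  have hz0 : z ≠ 0 := by
    intro h; rw [h, norm_zero] at hz₁; exact absurd hz₁ (not_lt.mpr h₁.le)
  have hR0 : 0 < R := lt_of_le_of_lt (norm_nonneg z) hzR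
  -- pointwise decomposition on a sphere avoiding `z`
  have split : ∀ {s : ℝ}, 0 < s → ‖z‖ ≠ s →
      (∮ w in C(0, s), (w - z)⁻¹ * f w)
        = (∮ w in C(0, s), dslope f z w) + f z * ∮ w in C(0, s), (w - z)⁻¹ := by
    intro s hs hzs
    have hcongr : Set.EqOn (fun w => (w - z)⁻¹ * f w)
        (fun w => dslope f z w - (-(f z)) * (w - z)⁻¹) (sphere (0:ℂ) s) := by
      intro w hw
      have hw' : ‖w‖ = s := by simpa using hw
      have hwz : w ≠ z := by intro h; rw [h] at hw'; exact hzs hw'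
      have hwz' : w - z ≠ 0 := sub_ne_zero.mpr hwz
      simp only [dslope_of_ne f hwz, slope_def_field]
      field_simp
      ring
    rw [circleIntegral.integral_congr hs.le hcongr]
    have hi1 : CircleIntegrable (dslope f z) 0 s :=
      (dslope_cont_sphere hf hz0 hs hzs).circleIntegrable hs.le
    have hi2 : CircleIntegrable (fun w => (-(f z)) * (w - z)⁻¹) 0 s := by
      apply ContinuousOn.circleIntegrable hs.le
      apply continuousOn_const.mul
      intro w hw
      have hw' : ‖w‖ = s := by simpa using hw
      have hwz : w ≠ z := by intro h; rw [h] at hw'; exact hzs hw'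
      exact ((continuousAt_id.sub continuousAt_const).inv₀
        (sub_ne_zero.mpr hwz)).continuousWithinAt
    rw [circleIntegral.integral_sub hi1 hi2, circleIntegral.integral_const_mul]
    ring
  have hzR' : ‖z‖ ≠ R := hzR.ne
  have hz₁' : ‖z‖ ≠ ρ₁ := hz₁.ne'
  rw [split hR0 hzR', split h₁ hz₁']
  -- the dslope integrals over the two circles agree
  have hann : (∮ w in C(0, R), dslope f z w) = ∮ w in C(0, ρ₁), dslope f z w := by
    apply circleIntegral_eq_of_differentiable_on_annulus_off_countable h₁ (le_of_lt
      (lt_trans hz₁ hzR)) (Set.countable_singleton z)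
    · intro w hw
      simp only [Set.mem_diff, mem_closedBall, mem_ball, dist_zero_right] at hw
      have hw0 : w ≠ 0 := by
        intro h; rw [h, norm_zero] at hw; exact hw.2 h₁
      rcases eq_or_ne w z with rfl | hwz
      · exact (continuousAt_dslope_same.mpr (hf w hw0)).continuousWithinAt
      · exact ((continuousAt_dslope_of_ne hwz).mpr (hf w hw0).continuousAt).continuousWithinAt
    · intro w hw
      obtain ⟨hw1, hw2⟩ := hw
      simp only [Set.mem_diff, mem_ball, mem_closedBall, dist_zero_right] at hw1
      have hw0 : w ≠ 0 := by
        intro h; rw [h, norm_zero] at hw1; exact hw1.2 h₁.le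
      have hwz : w ≠ z := by
        intro h; exact hw2 (h ▸ Set.mem_singleton z)
      exact (differentiableAt_dslope_of_ne hwz).mpr (hf w hw0)
  -- the Cauchy kernels
  have hker1 : (∮ w in C(0, R), (w - z)⁻¹) = 2 * (Real.pi : ℂ) * Complex.I :=
    circleIntegral.integral_sub_inv_of_mem_ball (by simpa [mem_ball_zero_iff] using hzR)
  have hker2 : (∮ w in C(0, ρ₁), (w - z)⁻¹) = 0 := by
    apply circleIntegral_eq_zero_of_differentiable_on_off_countable h₁.le
      Set.countable_empty
    · intro w hw
      rw [mem_closedBall, dist_zero_right] at hw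
      have hwz : w - z ≠ 0 := sub_ne_zero.mpr (by
        intro h; rw [h] at hw; exact absurd hz₁ (not_lt.mpr hw))
      exact ((continuousAt_id.sub continuousAt_const).inv₀ hwz).continuousWithinAt
    · intro w hw
      rw [Set.diff_empty, mem_ball, dist_zero_right] at hw
      have hwz : w - z ≠ 0 := sub_ne_zero.mpr (by
        intro h; rw [h] at hw; exact absurd (lt_trans hw hz₁) (lt_irrefl _))
      exact (differentiableAt_id.sub_const z).inv hwz
  rw [hann, hker1, hker2]
  ring

lemma diffAt_f (a b : ℝ) (k : ℕ) {w : ℂ} (hw : w ≠ 0) :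
    DifferentiableAt ℂ
      (fun w : ℂ => (w - 1) ^ k * Complex.exp ((a : ℂ) * w + (b : ℂ) / w)) w :=
  ((differentiableAt_id.sub_const 1).pow k).mul (diffAt_exp_ab a b hw)

lemma contOn_phi_integrand (a b : ℝ) (j : ℕ) (t : ℤ) {r : ℝ} (hr0 : 0 < r) (hr1 : r < 1) :
    ContinuousOn
      (fun z : ℂ => z ^ t * (z - 1) ^ (-((j : ℤ) + 1)) *
        Complex.exp (-((a : ℂ) * z) - (b : ℂ) / z)) (sphere (1:ℂ) r) := by
  intro z hz
  obtain ⟨hlo, hhi⟩ := sphere_norm_bounds hz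
  have hz0 : z ≠ 0 := by
    intro h; rw [h, norm_zero] at hlo; linarith
  have hz1 : z - 1 ≠ 0 := by
    intro h
    have := mem_sphere_iff_norm.mp hz
    rw [h, norm_zero] at this
    exact hr0.ne this
  apply ContinuousAt.continuousWithinAt
  apply ContinuousAt.mul
  apply ContinuousAt.mul
  · exact (differentiableAt_zpow.mpr (Or.inl hz0)).continuousAt
  · exact (continuousAt_id.sub continuousAt_const).zpow₀ _ (Or.inl hz1)
  · exact (((differentiableAt_const _).mul differentiableAt_id).neg.sub
      ((differentiableAt_const _).div differentiableAt_id hz0)).cexp.continuousAt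

end helperdefs

set_option maxHeartbeats 1000000 in
open Metric in
lemma key_pointwise (n : ℕ) (a b ρ r : ℝ) (j k : ℕ) (hρ0 : 0 < ρ)
    (hr0 : 0 < r) (hr1 : r < 1) {z : ℂ} (hz : z ∈ sphere (1:ℂ) r) :
    HasSum (fun y : ℤ => z ^ y * (z - 1) ^ (-((j : ℤ) + 1)) *
        Complex.exp (-((a : ℂ) * z) - (b : ℂ) / z) * Psi n a b ρ k (y - n))
      ((z - 1) ^ ((k : ℤ) - ((j : ℤ) + 1))) := by
  set R : ℝ := r + 2 with hRdef
  set ρ₂ : ℝ := (1 - r) / 2 with hρ₂def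
  have hR0 : (0:ℝ) < R := by positivity
  have hRr : 1 + r < R := by simp only [hRdef]; linarith
  have hρ₂0 : (0:ℝ) < ρ₂ := by simp only [hρ₂def]; linarith
  have hρ₂r : ρ₂ < 1 - r := by simp only [hρ₂def]; linarith
  obtain ⟨hlo, hhi⟩ := sphere_norm_bounds hz
  have hz0 : z ≠ 0 := by
    intro h; rw [h, norm_zero] at hlo; linarith
  have hz1 : z - 1 ≠ 0 := by
    intro h
    have := mem_sphere_iff_norm.mp hz
    rw [h, norm_zero] at this
    exact hr0.ne this
  have hzρ₂ : ρ₂ < ‖z‖ := lt_of_lt_of_le (by linarith) hlo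
  have hzR : ‖z‖ < R := lt_of_le_of_lt hhi hRr
  set P : ℂ := (z - 1) ^ (-((j : ℤ) + 1)) *
    Complex.exp (-((a : ℂ) * z) - (b : ℂ) / z) with hPdef
  set fE : ℂ → ℂ := fun w => (w - 1) ^ k * Complex.exp ((a : ℂ) * w + (b : ℂ) / w)
    with hfEdef
  -- ===== positive part =====
  set GG : ℕ → ℂ → ℂ := fun m w => (P * z ^ (m : ℤ)) *
    ((w - 1) ^ k * w ^ (-(m : ℤ) - 1) * Complex.exp ((a : ℂ) * w + (b : ℂ) / w))
    with hGGdef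
  have hGGcont : ∀ m, ContinuousOn (GG m) (sphere (0:ℂ) R) := by
    intro m w hw
    have hw' : ‖w‖ = R := by simpa using hw
    have hw0 : w ≠ 0 := by intro h; rw [h, norm_zero] at hw'; exact hR0.ne hw'
    exact (continuousAt_const.mul
      (diffAt_psi_integrand a b k _ hw0).continuousAt).continuousWithinAt
  have hGGbd : ∀ m, ∀ w ∈ sphere (0:ℂ) R, ‖GG m w‖ ≤
      (‖P‖ * (1 + r) ^ m) * ((R + 1) ^ k * R ^ (-(m : ℤ) - 1) *
        Real.exp (|a| * R + |b| / R)) := by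
    intro m w hw
    have h1 : ‖z‖ ^ m ≤ (1 + r) ^ m := pow_le_pow_left₀ (norm_nonneg _) hhi m
    have h2 := psi_integrand_bound a b k (-(m:ℤ) - 1) hR0 hw
    simp only [hGGdef, norm_mul, norm_zpow, norm_pow, zpow_natCast]
    apply mul_le_mul (mul_le_mul_of_nonneg_left h1 (norm_nonneg _)) _
      (by positivity) (mul_nonneg (norm_nonneg _) (pow_nonneg (by linarith) m))
    simpa only [norm_mul, norm_pow, norm_zpow] using h2
  have hGGBsum : Summable (fun m : ℕ => (‖P‖ * (1 + r) ^ m) *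
      ((R + 1) ^ k * R ^ (-(m : ℤ) - 1) * Real.exp (|a| * R + |b| / R))) := by
    have hq : (1 + r) / R < 1 := by rw [div_lt_one hR0]; linarith
    have hq0 : 0 ≤ (1 + r) / R := by positivity
    apply Summable.congr ((summable_geometric_of_lt_one hq0 hq).mul_left
      (‖P‖ * ((R + 1) ^ k * Real.exp (|a| * R + |b| / R) * R⁻¹)))
    intro m
    rw [div_pow]
    rw [show (-(m:ℤ) - 1) = -(((m+1 : ℕ)):ℤ) by push_cast; ring]
    simp only [zpow_neg, zpow_natCast, pow_succ, mul_inv]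
    field_simp
  have hswapP := circle_hasSum (0:ℂ) R hR0.le GG hGGcont _ hGGBsum hGGbd
  have hptP : Set.EqOn (fun w => ∑' m : ℕ, GG m w)
      (fun w => P * ((w - z)⁻¹ * fE w)) (sphere (0:ℂ) R) := by
    intro w hw
    have hw' : ‖w‖ = R := by simpa using hw
    have hzw : ‖z‖ < ‖w‖ := by rw [hw']; exact hzR
    have hgeo := (hasSum_geom_pair hzw).mul_left (P * fE w)
    rw [show (P * fE w) * (w - z)⁻¹ = P * ((w - z)⁻¹ * fE w) by ring] at hgeo
    refine HasSum.tsum_eq (hgeo.congr_fun ?_)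
    intro m
    simp only [hGGdef, hfEdef, zpow_natCast]
    ring
  have hterm : ∀ m : ℕ, (2 * (Real.pi : ℂ) * Complex.I)⁻¹ * (∮ w in C(0, R), GG m w)
      = z ^ (m:ℤ) * (z - 1) ^ (-((j : ℤ) + 1)) *
          Complex.exp (-((a : ℂ) * z) - (b : ℂ) / z) * Psi n a b ρ k ((m:ℤ) - n) := by
    intro m
    rw [psi_radius_indep n a b k ((m:ℤ) - n) hρ0 hR0]
    unfold Psi
    simp only [show -((m:ℤ) - n + n + 1) = -(m:ℤ) - 1 from by ring]
    simp only [hGGdef]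
    rw [circleIntegral.integral_const_mul]
    simp only [hPdef]
    ring
  have hPos : HasSum (fun m : ℕ => z ^ ((m:ℕ):ℤ) * (z - 1) ^ (-((j : ℤ) + 1)) *
      Complex.exp (-((a : ℂ) * z) - (b : ℂ) / z) * Psi n a b ρ k (((m:ℕ):ℤ) - n))
      ((2 * (Real.pi : ℂ) * Complex.I)⁻¹ *
        (P * ∮ w in C(0, R), (w - z)⁻¹ * fE w)) := by
    have h1 := hswapP.mul_left (2 * (Real.pi : ℂ) * Complex.I)⁻¹
    rw [circleIntegral.integral_congr hR0.le hptP,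
      circleIntegral.integral_const_mul] at h1
    exact h1.congr_fun (fun m => (hterm m).symm)
  -- ===== negative part =====
  set GH : ℕ → ℂ → ℂ := fun l w => (P * z ^ (-((l : ℤ) + 1))) *
    ((w - 1) ^ k * w ^ ((l : ℤ)) * Complex.exp ((a : ℂ) * w + (b : ℂ) / w))
    with hGHdef
  have hGHcont : ∀ l, ContinuousOn (GH l) (sphere (0:ℂ) ρ₂) := by
    intro l w hw
    have hw' : ‖w‖ = ρ₂ := by simpa using hw
    have hw0 : w ≠ 0 := by intro h; rw [h, norm_zero] at hw'; exact hρ₂0.ne hw'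
    exact (continuousAt_const.mul
      (diffAt_psi_integrand a b k _ hw0).continuousAt).continuousWithinAt
  have hznorm : ∀ l : ℕ, ‖z ^ (-((l : ℤ) + 1))‖ ≤ ((1 - r) ^ (l + 1))⁻¹ := by
    intro l
    rw [show -((l:ℤ) + 1) = -(((l + 1 : ℕ)):ℤ) by push_cast; ring, zpow_neg,
      zpow_natCast, norm_inv, norm_pow]
    exact inv_anti₀ (pow_pos (by linarith) _)
      (pow_le_pow_left₀ (by linarith) hlo _)
  have hGHbd : ∀ l, ∀ w ∈ sphere (0:ℂ) ρ₂, ‖GH l w‖ ≤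
      (‖P‖ * ((1 - r) ^ (l + 1))⁻¹) * ((ρ₂ + 1) ^ k * ρ₂ ^ ((l:ℤ)) *
        Real.exp (|a| * ρ₂ + |b| / ρ₂)) := by
    intro l w hw
    have h2 := psi_integrand_bound a b k ((l:ℤ)) hρ₂0 hw
    rw [norm_mul, norm_mul]
    apply mul_le_mul (mul_le_mul_of_nonneg_left (hznorm l) (norm_nonneg _)) h2
      (norm_nonneg _)
      (mul_nonneg (norm_nonneg _) (inv_nonneg.mpr (pow_nonneg (by linarith) _)))
  have hGHBsum : Summable (fun l : ℕ => (‖P‖ * ((1 - r) ^ (l + 1))⁻¹) *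
      ((ρ₂ + 1) ^ k * ρ₂ ^ ((l:ℤ)) * Real.exp (|a| * ρ₂ + |b| / ρ₂))) := by
    have hq : ρ₂ / (1 - r) < 1 := by rw [div_lt_one (by linarith)]; exact hρ₂r
    have hq0 : 0 ≤ ρ₂ / (1 - r) := le_of_lt (div_pos hρ₂0 (by linarith))
    apply Summable.congr ((summable_geometric_of_lt_one hq0 hq).mul_left
      (‖P‖ * (1 - r)⁻¹ * ((ρ₂ + 1) ^ k * Real.exp (|a| * ρ₂ + |b| / ρ₂))))
    intro l
    have h1r : ((1:ℝ) - r) ≠ 0 := by linarith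
    rw [div_pow, zpow_natCast, pow_succ]
    field_simp
  have hswapN := circle_hasSum (0:ℂ) ρ₂ hρ₂0.le GH hGHcont _ hGHBsum hGHbd
  have hptN : Set.EqOn (fun w => ∑' l : ℕ, GH l w)
      (fun w => P * ((z - w)⁻¹ * fE w)) (sphere (0:ℂ) ρ₂) := by
    intro w hw
    have hw' : ‖w‖ = ρ₂ := by simpa using hw
    have hwz : ‖w‖ < ‖z‖ := by rw [hw']; exact hzρ₂
    have hgeo := (hasSum_geom_pair hwz).mul_left (P * fE w)
    rw [show (P * fE w) * (z - w)⁻¹ = P * ((z - w)⁻¹ * fE w) by ring] at hgeo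
    refine HasSum.tsum_eq (hgeo.congr_fun ?_)
    intro l
    simp only [hGHdef, hfEdef, zpow_natCast,
      show -((l:ℤ) + 1) = -(l:ℤ) - 1 from by ring]
    ring
  have htermN : ∀ l : ℕ, (2 * (Real.pi : ℂ) * Complex.I)⁻¹ * (∮ w in C(0, ρ₂), GH l w)
      = z ^ (-((l:ℤ) + 1)) * (z - 1) ^ (-((j : ℤ) + 1)) *
          Complex.exp (-((a : ℂ) * z) - (b : ℂ) / z) *
          Psi n a b ρ k ((-((l:ℤ) + 1)) - n) := by
    intro l
    rw [psi_radius_indep n a b k ((-((l:ℤ) + 1)) - n) hρ0 hρ₂0]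
    unfold Psi
    simp only [show -(-((l:ℤ) + 1) - n + n + 1) = (l:ℤ) from by ring]
    simp only [hGHdef]
    rw [circleIntegral.integral_const_mul]
    simp only [hPdef]
    ring
  have hNeg : HasSum (fun l : ℕ => z ^ (-((l:ℤ) + 1)) * (z - 1) ^ (-((j : ℤ) + 1)) *
      Complex.exp (-((a : ℂ) * z) - (b : ℂ) / z) * Psi n a b ρ k ((-((l:ℤ) + 1)) - n))
      ((2 * (Real.pi : ℂ) * Complex.I)⁻¹ *
        (P * ∮ w in C(0, ρ₂), (z - w)⁻¹ * fE w)) := by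
    have h1 := hswapN.mul_left (2 * (Real.pi : ℂ) * Complex.I)⁻¹
    rw [circleIntegral.integral_congr hρ₂0.le hptN,
      circleIntegral.integral_const_mul] at h1
    exact h1.congr_fun (fun l => (htermN l).symm)
  -- ===== combine =====
  have hdiff : ∀ w : ℂ, w ≠ 0 → DifferentiableAt ℂ fE w := fun w hw => diffAt_f a b k hw
  have htc := two_circle_formula hdiff hρ₂0 hzρ₂ hzR
  have hflip : (∮ w in C(0, ρ₂), (z - w)⁻¹ * fE w)
      = -(∮ w in C(0, ρ₂), (w - z)⁻¹ * fE w) := by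
    have heq : Set.EqOn (fun w => (z - w)⁻¹ * fE w)
        (fun w => (-1 : ℂ) * ((w - z)⁻¹ * fE w)) (sphere (0:ℂ) ρ₂) := by
      intro w _
      show (z - w)⁻¹ * fE w = (-1 : ℂ) * ((w - z)⁻¹ * fE w)
      rw [show z - w = -(w - z) by ring, inv_neg]
      ring
    rw [circleIntegral.integral_congr hρ₂0.le heq, circleIntegral.integral_const_mul]
    ring
  have htotal := HasSum.of_nat_of_neg_add_one
    (f := fun y : ℤ => z ^ y * (z - 1) ^ (-((j : ℤ) + 1)) *
      Complex.exp (-((a : ℂ) * z) - (b : ℂ) / z) * Psi n a b ρ k (y - n))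
    hPos hNeg
  have hval : (2 * (Real.pi : ℂ) * Complex.I)⁻¹ *
        (P * ∮ w in C(0, R), (w - z)⁻¹ * fE w) +
      (2 * (Real.pi : ℂ) * Complex.I)⁻¹ *
        (P * ∮ w in C(0, ρ₂), (z - w)⁻¹ * fE w)
      = (z - 1) ^ ((k : ℤ) - ((j : ℤ) + 1)) := by
    rw [hflip]
    rw [show (2 * (Real.pi : ℂ) * Complex.I)⁻¹ *
        (P * ∮ w in C(0, R), (w - z)⁻¹ * fE w) +
      (2 * (Real.pi : ℂ) * Complex.I)⁻¹ *
        (P * -(∮ w in C(0, ρ₂), (w - z)⁻¹ * fE w))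
      = (2 * (Real.pi : ℂ) * Complex.I)⁻¹ * (P *
        ((∮ w in C(0, R), (w - z)⁻¹ * fE w) -
          ∮ w in C(0, ρ₂), (w - z)⁻¹ * fE w)) from by ring]
    rw [htc]
    rw [show (2 * (Real.pi : ℂ) * Complex.I)⁻¹ *
        (P * (2 * (Real.pi : ℂ) * Complex.I * fE z))
      = ((2 * (Real.pi : ℂ) * Complex.I)⁻¹ * (2 * (Real.pi : ℂ) * Complex.I)) *
        (P * fE z) from by ring, inv_mul_cancel₀ two_pi_I_ne_zero', one_mul]
    simp only [hPdef, hfEdef]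
    rw [show (z - 1) ^ (-((j:ℤ) + 1)) * Complex.exp (-((a : ℂ) * z) - (b : ℂ) / z) *
        ((z - 1) ^ k * Complex.exp ((a : ℂ) * z + (b : ℂ) / z))
      = ((z - 1) ^ (-((j:ℤ) + 1)) * (z - 1) ^ ((k:ℕ):ℤ)) *
        (Complex.exp (-((a : ℂ) * z) - (b : ℂ) / z) *
          Complex.exp ((a : ℂ) * z + (b : ℂ) / z)) from by rw [zpow_natCast]; ring]
    rw [← Complex.exp_add,
      show -((a : ℂ) * z) - (b : ℂ) / z + ((a : ℂ) * z + (b : ℂ) / z) = 0 from by ring,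
      Complex.exp_zero, mul_one, ← zpow_add₀ hz1]
    norm_num
    try congr 1
    try ring
  rwa [hval] at htotal

/-- biorthogonality `∑_{x∈ℤ} Φ_j(x) Ψ_k(x) = δ_{j,k}` for
`0 ≤ j, k ≤ n−1`, with absolute convergence of the series. -/
theorem stmt7 (n : ℕ) (hn : 1 ≤ n) (a b : ℝ)
    (ρ : ℝ) (hρ : 1 < ρ) (r : ℝ) (hr0 : 0 < r) (hr1 : r < 1)
    (j k : ℕ) (hj : j ≤ n - 1) (hk : k ≤ n - 1) :
    Summable (fun x : ℤ => ‖Phi n a b r j x * Psi n a b ρ k x‖) ∧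
    ∑' x : ℤ, Phi n a b r j x * Psi n a b ρ k x
      = if j = k then 1 else 0 := by
  open Metric in
  have hρ0 : (0:ℝ) < ρ := lt_trans one_pos hρ
  set R : ℝ := r + 2 with hRdef
  set ρ₂ : ℝ := (1 - r) / 2 with hρ₂def
  have hR0 : (0:ℝ) < R := by positivity
  have hRr : 1 + r < R := by simp only [hRdef]; linarith
  have hρ₂0 : (0:ℝ) < ρ₂ := by simp only [hρ₂def]; linarith
  have hρ₂r : ρ₂ < 1 - r := by simp only [hρ₂def]; linarith
  set Ea : ℝ := Real.exp (|a| * (1 + r) + |b| / (1 - r)) with hEadef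
  set CR : ℝ := (R + 1) ^ k * Real.exp (|a| * R + |b| / R) with hCRdef
  set Cρ : ℝ := (ρ₂ + 1) ^ k * Real.exp (|a| * ρ₂ + |b| / ρ₂) with hCρdef
  have hEapos : 0 < Ea := Real.exp_pos _
  have hCRpos : 0 < CR := by positivity
  have hCρpos : 0 < Cρ := by positivity
  set φbd : ℤ → ℝ := fun y =>
    (if 0 ≤ y then (1 + r) else (1 - r)) ^ y * (r ^ (-((j : ℤ) + 1)) * Ea) with hφbddef
  set ψbd : ℤ → ℝ := fun y =>
    if 0 ≤ y then CR * R ^ (-y) else Cρ * ρ₂ ^ (-y) with hψbddef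
  have hφbd_nonneg : ∀ y, 0 ≤ φbd y := by
    intro y
    apply mul_nonneg (zpow_nonneg (by split <;> linarith) _)
    positivity
  have hψbd_nonneg : ∀ y, 0 ≤ ψbd y := by
    intro y
    simp only [hψbddef]
    split
    · positivity
    · positivity
  -- Ψ bound
  have hψ : ∀ y : ℤ, ‖Psi n a b ρ k (y - n)‖ ≤ ψbd y := by
    intro y
    have harith : -(y - (n:ℤ) + n) = -y := by ring
    by_cases hy : 0 ≤ y
    · rw [psi_radius_indep n a b k (y - n) hρ0 hR0]
      have := psi_bound n a b k (y - n) hR0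
      rw [harith] at this
      simpa only [hψbddef, hy, if_true, hCRdef] using this
    · rw [psi_radius_indep n a b k (y - n) hρ0 hρ₂0]
      have := psi_bound n a b k (y - n) hρ₂0
      rw [harith] at this
      simpa only [hψbddef, hy, if_false, hCρdef] using this
  -- Φ bound
  have hφ : ∀ y : ℤ, ‖Phi n a b r j (y - n)‖ ≤ r * φbd y := by
    intro y
    have harith : y - (n:ℤ) + n = y := by ring
    unfold Phi
    rw [norm_mul, norm_two_pi_I_inv]
    have hbd : ∀ z ∈ sphere (1:ℂ) r,
        ‖z ^ (y - (n:ℤ) + n) * (z - 1) ^ (-((j : ℤ) + 1)) *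
          Complex.exp (-((a : ℂ) * z) - (b : ℂ) / z)‖ ≤ φbd y := by
      intro z hz
      rw [harith]
      simpa only [hφbddef, mul_assoc] using phi_integrand_bound a b j y hr0 hr1 hz
    have hint := circleIntegral.norm_integral_le_of_norm_le_const (c := (1:ℂ)) hr0.le hbd
    refine le_trans (mul_le_mul_of_nonneg_left hint (by positivity)) (le_of_eq ?_)
    have h2π : (2 * Real.pi) ≠ 0 := by positivity
    field_simp
  -- summability of the bound
  have hBsum : Summable (fun y : ℤ => φbd y * ψbd y) := by
    apply Summable.of_nat_of_neg_add_one
    · have hq : (1 + r) / R < 1 := by rw [div_lt_one hR0]; linarith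
      have hq0 : 0 ≤ (1 + r) / R := by positivity
      apply Summable.congr ((summable_geometric_of_lt_one hq0 hq).mul_left
        ((r ^ (-((j : ℤ) + 1)) * Ea) * CR))
      intro m
      have h0m : (0:ℤ) ≤ (m:ℤ) := Int.natCast_nonneg m
      simp only [hφbddef, hψbddef, h0m, if_true]
      rw [div_pow]
      simp only [zpow_neg, zpow_natCast]
      field_simp
    · have h1r : ((1:ℝ) - r) ≠ 0 := by linarith
      have hq : ρ₂ / (1 - r) < 1 := by rw [div_lt_one (by linarith)]; exact hρ₂r
      have hq0 : 0 ≤ ρ₂ / (1 - r) := le_of_lt (div_pos hρ₂0 (by linarith))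
      apply Summable.congr ((summable_geometric_of_lt_one hq0 hq).mul_left
        ((r ^ (-((j : ℤ) + 1)) * Ea) * Cρ * (ρ₂ / (1 - r))))
      intro l
      have h0l : ¬ (0:ℤ) ≤ -((l:ℤ) + 1) := by omega
      simp only [hφbddef, hψbddef, h0l, if_false, neg_neg]
      rw [show (-((l:ℤ)+1)) = -(((l+1 : ℕ)):ℤ) by push_cast; ring]
      simp only [zpow_neg, zpow_add₀ hρ₂0.ne', zpow_natCast, zpow_one]
      field_simp
      have key : ((1:ℝ) - r)⁻¹ ^ l * (1 - r) ^ l = 1 := by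
        rw [inv_pow, inv_mul_cancel₀ (pow_ne_zero _ h1r)]
      clear_value ρ₂
      linear_combination (ρ₂ ^ l - ρ₂ ^ l * r) * key
  -- the summability half of the statement
  have hsummable : Summable (fun x : ℤ => ‖Phi n a b r j x * Psi n a b ρ k x‖) := by
    have h1 : Summable (fun y : ℤ => r * (φbd y * ψbd y)) := hBsum.mul_left r
    have h2 : Summable ((fun y : ℤ => r * (φbd y * ψbd y)) ∘ (· + (n:ℤ))) :=
      ((Equiv.addRight (n:ℤ)).summable_iff).mpr h1
    have h2' : Summable (fun x : ℤ => r * (φbd (x + n) * ψbd (x + n))) := h2.congr (fun _ => rfl)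
    apply Summable.of_nonneg_of_le (fun x => norm_nonneg _) _ h2'
    intro x
    have hx : x + (n:ℤ) - n = x := by ring
    rw [norm_mul]
    calc ‖Phi n a b r j x‖ * ‖Psi n a b ρ k x‖
        = ‖Phi n a b r j (x + n - n)‖ * ‖Psi n a b ρ k (x + n - n)‖ := by rw [hx]
      _ ≤ (r * φbd (x + n)) * ψbd (x + n) :=
          mul_le_mul (hφ (x + n)) (hψ (x + n)) (norm_nonneg _)
            (mul_nonneg hr0.le (hφbd_nonneg _))
      _ = r * (φbd (x + n) * ψbd (x + n)) := by ring
  refine ⟨hsummable, ?_⟩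
  -- rewrite each term as a circle integral in `z`
  set G : ℤ → ℂ → ℂ := fun y z => z ^ y * (z - 1) ^ (-((j : ℤ) + 1)) *
      Complex.exp (-((a : ℂ) * z) - (b : ℂ) / z) * Psi n a b ρ k (y - n) with hGdef
  have hstepA : ∀ y : ℤ, Phi n a b r j (y - n) * Psi n a b ρ k (y - n)
      = (2 * (Real.pi : ℂ) * Complex.I)⁻¹ * ∮ z in C(1, r), G y z := by
    intro y
    unfold Phi
    simp only [sub_add_cancel]
    have hs := circleIntegral.integral_smul_const
      (fun z : ℂ => z ^ y * (z - 1) ^ (-((j : ℤ) + 1)) *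
        Complex.exp (-((a : ℂ) * z) - (b : ℂ) / z))
      (Psi n a b ρ k (y - n)) 1 r
    simp only [smul_eq_mul] at hs
    rw [mul_assoc, ← hs]
  have hGcont : ∀ y : ℤ, ContinuousOn (G y) (sphere (1:ℂ) r) := by
    intro y
    simp only [hGdef]
    exact (contOn_phi_integrand a b j y hr0 hr1).mul continuousOn_const
  have hGbd : ∀ y : ℤ, ∀ z ∈ sphere (1:ℂ) r, ‖G y z‖ ≤ φbd y * ψbd y := by
    intro y z hzz
    simp only [hGdef]
    rw [norm_mul]
    refine mul_le_mul ?_ (hψ y) (norm_nonneg _) (hφbd_nonneg y)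
    simpa only [hφbddef, mul_assoc] using phi_integrand_bound a b j y hr0 hr1 hzz
  have hswap := circle_hasSum (1:ℂ) r hr0.le G hGcont _ hBsum hGbd
  have hkey : Set.EqOn (fun z => ∑' y : ℤ, G y z)
      (fun z => (z - 1) ^ ((k : ℤ) - ((j : ℤ) + 1))) (sphere (1:ℂ) r) := by
    intro z hzz
    exact (key_pointwise n a b ρ r j k hρ0 hr0 hr1 hzz).tsum_eq
  calc ∑' x : ℤ, Phi n a b r j x * Psi n a b ρ k x
      = ∑' y : ℤ, Phi n a b r j (y - n) * Psi n a b ρ k (y - n) :=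
        ((Equiv.subRight (n:ℤ)).tsum_eq
          (fun x => Phi n a b r j x * Psi n a b ρ k x)).symm
    _ = ∑' y : ℤ, (2 * (Real.pi : ℂ) * Complex.I)⁻¹ * ∮ z in C(1, r), G y z :=
        tsum_congr hstepA
    _ = (2 * (Real.pi : ℂ) * Complex.I)⁻¹ * ∑' y : ℤ, ∮ z in C(1, r), G y z :=
        tsum_mul_left
    _ = (2 * (Real.pi : ℂ) * Complex.I)⁻¹ * ∮ z in C(1, r), ∑' y : ℤ, G y z := by
        rw [hswap.tsum_eq]
    _ = (2 * (Real.pi : ℂ) * Complex.I)⁻¹ *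
          ∮ z in C(1, r), (z - 1) ^ ((k : ℤ) - ((j : ℤ) + 1)) := by
        rw [circleIntegral.integral_congr hr0.le hkey]
    _ = if j = k then 1 else 0 := by
        by_cases hjk : j = k
        · subst hjk
          simp only [if_true]
          rw [show ((j : ℤ) - ((j : ℤ) + 1)) = -1 by ring]
          have h1 : Set.EqOn (fun z : ℂ => (z - 1) ^ (-1 : ℤ))
              (fun z : ℂ => (z - 1)⁻¹) (sphere (1:ℂ) r) := by
            intro z _
            simp [zpow_neg_one]
          rw [circleIntegral.integral_congr hr0.le h1,
            circleIntegral.integral_sub_inv_of_mem_ball (Metric.mem_ball_self hr0),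
            inv_mul_cancel₀ two_pi_I_ne_zero']
        · simp only [hjk, if_false]
          rw [circleIntegral.integral_sub_zpow_of_ne (by omega) 1 1 r, mul_zero]
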